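/- Let Σ be a symmetric positive definite q×q real matrix, μ ∈ ℝ^q, and let g(x) = (2π)^{−q/2} (det Σ)^{−1/2} exp(−(1/2)(x − μ)ᵀ Σ⁻¹ (x − μ)) be the corresponding multivariate normal density. Let R ⊆ ℝ^q be a Borel set with Z = ∫_R g(x) dx > 0, and let p = (1/Z) g·1_R be the normalized restriction of g to R. Let μ^{TN} = ∫_R x p(x) dx and Σ^{TN} = ∫_R (x − μ^{TN})(x − μ^{TN})ᵀ p(x) dx be the mean and covariance of p, and set d = μ^{TN} − μ. Then the differential entropy of p satisfies −∫_R p(x) log p(x) dx = (1/2) log((2π)^q det Σ) + (1/2) Tr(Σ⁻¹ (Σ^{TN} + d dᵀ)) + log Z. -/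

import Mathlib

open MeasureTheory Real Set Matrix Bornology

/-- The multivariate normal density with mean `m` and covariance `S`:
`g(z) = (2π)^{−q/2} (det S)^{−1/2} exp(−(1/2)(z − m)ᵀ S⁻¹ (z − m))`. -/
noncomputable def gaussDensity {ι : Type*} [Fintype ι] [DecidableEq ι]
    (m : ι → ℝ) (S : Matrix ι ι ℝ) (z : ι → ℝ) : ℝ :=
  (2 * π) ^ (-(Fintype.card ι : ℝ) / 2) * (Real.sqrt S.det)⁻¹ *
    Real.exp (-(1 / 2) * ((z - m) ⬝ᵥ (S⁻¹ *ᵥ (z - m))))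

lemma quadform_cont {q : ℕ} (A : Matrix (Fin q) (Fin q) ℝ) :
    Continuous fun y : Fin q → ℝ => y ⬝ᵥ A *ᵥ y := by
  simp only [dotProduct, Matrix.mulVec]
  exact continuous_finset_sum _ fun i _ =>
    (continuous_apply i).mul (continuous_finset_sum _ fun j _ =>
      (continuous_const.mul (continuous_apply j)))

lemma posdef_lower {q : ℕ} {A : Matrix (Fin q) (Fin q) ℝ} (hA : A.PosDef) :
    ∃ c : ℝ, 0 < c ∧ ∀ y : Fin q → ℝ, c * (∑ i, y i ^ 2) ≤ y ⬝ᵥ A *ᵥ y := by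
  have hpos : ∀ y : Fin q → ℝ, y ≠ 0 → 0 < y ⬝ᵥ A *ᵥ y := fun y hy => by simpa using hA.dotProduct_mulVec_pos hy
  rcases Nat.eq_zero_or_pos q with hq | hq
  · refine ⟨1, one_pos, fun y => ?_⟩
    subst hq
    have : y = 0 := Subsingleton.elim _ _
    simp [this]
  · -- sphere
    set S : Set (Fin q → ℝ) := {y | ∑ i, y i ^ 2 = 1} with hS
    have hNcont : Continuous fun y : Fin q → ℝ => ∑ i, y i ^ 2 :=
      continuous_finset_sum _ fun i _ => (continuous_apply i).pow 2
    have hSc : IsClosed S := isClosed_eq hNcont continuous_const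
    have hSb : IsBounded S := by
      apply (Metric.isBounded_iff_subset_closedBall 0).2
      refine ⟨1, fun y hy => ?_⟩
      simp only [Metric.mem_closedBall, dist_zero_right]
      rw [pi_norm_le_iff_of_nonneg zero_le_one]
      intro i
      have h1 : y i ^ 2 ≤ 1 := by
        have := Finset.single_le_sum (f := fun i => y i ^ 2) (fun i _ => sq_nonneg _)
          (Finset.mem_univ i)
        simpa [hy.out] using this.trans_eq hy.out
      have h2 : |y i| ≤ 1 := abs_le_one_iff_mul_self_le_one.2 (by nlinarith [h1, sq (y i)])
      simpa using h2
    have hScomp : IsCompact S := Metric.isCompact_of_isClosed_isBounded hSc hSb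
    have hne : S.Nonempty := by
      refine ⟨Pi.single ⟨0, hq⟩ 1, ?_⟩
      simp only [hS, Set.mem_setOf_eq]
      rw [Finset.sum_eq_single ⟨0, hq⟩]
      · simp
      · intro b _ hb; simp [Pi.single_apply, hb]
      · simp
    obtain ⟨y0, hy0S, hmin⟩ := hScomp.exists_isMinOn hne (quadform_cont A).continuousOn
    have hy0ne : y0 ≠ 0 := by
      intro h
      rw [h] at hy0S
      simp [hS] at hy0S
    refine ⟨y0 ⬝ᵥ A *ᵥ y0, hpos y0 hy0ne, fun y => ?_⟩
    rcases eq_or_ne y 0 with rfl | hy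
    · simp
    · have hsum : 0 < ∑ i, y i ^ 2 := by
        have hnn : 0 ≤ ∑ i, y i ^ 2 := Finset.sum_nonneg fun i _ => sq_nonneg _
        rcases hnn.lt_or_eq with h | h
        · exact h
        · exfalso; apply hy
          funext i
          have := (Finset.sum_eq_zero_iff_of_nonneg (fun i _ => sq_nonneg (y i))).1 h.symm i
            (Finset.mem_univ i)
          exact pow_eq_zero_iff (n := 2) (by norm_num) |>.1 this
      set r : ℝ := Real.sqrt (∑ i, y i ^ 2) with hr
      have hrpos : 0 < r := Real.sqrt_pos.2 hsum
      have hr2 : r ^ 2 = ∑ i, y i ^ 2 := Real.sq_sqrt hsum.le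
      set u : Fin q → ℝ := r⁻¹ • y with hu
      have huS : u ∈ S := by
        simp only [hS, Set.mem_setOf_eq, hu, Pi.smul_apply, smul_eq_mul, mul_pow,
          ← Finset.mul_sum]
        rw [← hr2]
        field_simp
      have hyru : y = r • u := by
        rw [hu, smul_smul, mul_inv_cancel₀ hrpos.ne', one_smul]
      have hFy : y ⬝ᵥ A *ᵥ y = r ^ 2 * (u ⬝ᵥ A *ᵥ u) := by
        rw [hyru, Matrix.mulVec_smul, smul_dotProduct, dotProduct_smul]
        simp [smul_eq_mul]; ring
      rw [hFy, ← hr2]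
      have := hmin huS
      have h2 : (y0 ⬝ᵥ A *ᵥ y0) ≤ u ⬝ᵥ A *ᵥ u := this
      nlinarith [sq_nonneg r]

lemma sq_mul_exp_le {b t : ℝ} (hb : 0 < b) : t ^ 2 * Real.exp (-(b * t ^ 2)) ≤ 1 / b := by
  have h1 : b * t ^ 2 ≤ Real.exp (b * t ^ 2) := by
    have := Real.add_one_le_exp (b * t ^ 2)
    linarith
  rw [Real.exp_neg, ← div_eq_mul_inv, div_le_div_iff₀ (Real.exp_pos _) hb]
  nlinarith [Real.exp_pos (b * t ^ 2)]

lemma pow4_mul_exp_le {b t : ℝ} (hb : 0 < b) : t ^ 4 * Real.exp (-(b * t ^ 2)) ≤ 4 / b ^ 2 := by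
  have h1 : (b * t ^ 2) ^ 2 / 4 ≤ Real.exp (b * t ^ 2) := by
    have h2 := Real.add_one_le_exp (b * t ^ 2 / 2)
    have h3 : Real.exp (b * t ^ 2) = Real.exp (b * t ^ 2 / 2) ^ 2 := by
      rw [← Real.exp_nat_mul]; ring_nf
    nlinarith [Real.exp_pos (b * t ^ 2 / 2), mul_nonneg hb.le (sq_nonneg t)]
  rw [Real.exp_neg, ← div_eq_mul_inv, div_le_div_iff₀ (Real.exp_pos _) (by positivity)]
  nlinarith [Real.exp_pos (b * t ^ 2)]

lemma oneD_integrable {a : ℝ} (ha : 0 < a) :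
    Integrable (fun t : ℝ => (1 + t ^ 2) ^ 2 * Real.exp (-(a * t ^ 2))) := by
  have ha2 : (0:ℝ) < a / 2 := by linarith
  have hmain : Integrable (fun t : ℝ => (1 + 4 / a + 16 / a ^ 2) * Real.exp (-(a / 2) * t ^ 2)) :=
    (integrable_exp_neg_mul_sq ha2).const_mul _
  refine hmain.mono' ((Continuous.mul (by continuity) (by continuity)).aestronglyMeasurable)
    (Filter.Eventually.of_forall fun t => ?_)
  rw [Real.norm_eq_abs, abs_of_nonneg (by positivity)]
  set E := Real.exp (-(a / 2 * t ^ 2)) with hE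
  have hEpos : 0 < E := Real.exp_pos _
  have hE1 : E ≤ 1 := Real.exp_le_one_iff.2 (by nlinarith [sq_nonneg t])
  have hsplit : Real.exp (-(a * t ^ 2)) = E * E := by
    rw [hE, ← Real.exp_add]; ring_nf
  have h2 : t ^ 2 * E ≤ 2 / a := by
    have h := sq_mul_exp_le (b := a / 2) (t := t) ha2
    have he : (1:ℝ) / (a / 2) = 2 / a := by field_simp
    rw [he] at h; exact h
  have h3 : t ^ 4 * E ≤ 16 / a ^ 2 := by
    have h := pow4_mul_exp_le (b := a / 2) (t := t) ha2
    have he : (4:ℝ) / (a / 2) ^ 2 = 16 / a ^ 2 := by field_simp; ring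
    rw [he] at h; exact h
  have key : (1 + t ^ 2) ^ 2 * E ≤ 1 + 4 / a + 16 / a ^ 2 := by
    have hexp : (1 + t ^ 2) ^ 2 * E = E + 2 * (t ^ 2 * E) + t ^ 4 * E := by ring
    rw [hexp]
    have h4a : (4:ℝ) / a = 2 * (2 / a) := by ring
    linarith
  calc (1 + t ^ 2) ^ 2 * Real.exp (-(a * t ^ 2)) = ((1 + t ^ 2) ^ 2 * E) * E := by
        rw [hsplit]; ring
    _ ≤ (1 + 4 / a + 16 / a ^ 2) * E := mul_le_mul_of_nonneg_right key hEpos.le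
    _ = (1 + 4 / a + 16 / a ^ 2) * Real.exp (-(a / 2) * t ^ 2) := by rw [hE]; ring_nf

lemma master_integrable {q : ℕ} {A : Matrix (Fin q) (Fin q) ℝ} (hA : A.PosDef)
    (μ : Fin q → ℝ) {h : (Fin q → ℝ) → ℝ} (hcont : Continuous h) {C : ℝ}
    (hb : ∀ x, |h x| ≤ C * (∏ i, (1 + (x i - μ i) ^ 2)) ^ 2) :
    Integrable fun x : Fin q → ℝ =>
      h x * Real.exp (-(1 / 2) * ((x - μ) ⬝ᵥ A *ᵥ (x - μ))) := by
  obtain ⟨c, hc0, hcle⟩ := posdef_lower hA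
  have hC0 : 0 ≤ C := by
    have := (abs_nonneg (h μ)).trans (hb μ)
    simpa using this
  have hc20 : (0:ℝ) < c / 2 := by linarith
  have hFi : ∀ i : Fin q, Integrable
      (fun t : ℝ => (1 + (t - μ i) ^ 2) ^ 2 * Real.exp (-(c / 2 * (t - μ i) ^ 2))) :=
    fun i => (oneD_integrable hc20).comp_sub_right (μ i)
  have hD : Integrable (fun x : Fin q → ℝ =>
      C * ∏ i, ((1 + (x i - μ i) ^ 2) ^ 2 * Real.exp (-(c / 2 * (x i - μ i) ^ 2)))) :=
    (Integrable.fintype_prod (f := fun i t =>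
      (1 + (t - μ i) ^ 2) ^ 2 * Real.exp (-(c / 2 * (t - μ i) ^ 2))) hFi).const_mul C
  refine hD.mono' ?_ (Filter.Eventually.of_forall fun x => ?_)
  · exact (hcont.mul (Real.continuous_exp.comp (continuous_const.mul
      ((quadform_cont A).comp (continuous_id.sub continuous_const))))).aestronglyMeasurable
  · rw [Real.norm_eq_abs, abs_mul, abs_of_nonneg (Real.exp_pos _).le]
    have hQ : c * (∑ i, (x i - μ i) ^ 2) ≤ (x - μ) ⬝ᵥ A *ᵥ (x - μ) := by
      have := hcle (x - μ)
      simpa using this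
    have hexp : Real.exp (-(1 / 2) * ((x - μ) ⬝ᵥ A *ᵥ (x - μ)))
        ≤ ∏ i, Real.exp (-(c / 2 * (x i - μ i) ^ 2)) := by
      rw [← Real.exp_sum]
      apply Real.exp_le_exp.2
      have hs : ∑ i : Fin q, -(c / 2 * (x i - μ i) ^ 2)
          = -(c / 2) * ∑ i : Fin q, (x i - μ i) ^ 2 := by
        rw [Finset.mul_sum]; apply Finset.sum_congr rfl; intros; ring
      rw [hs]; linarith
    calc |h x| * Real.exp (-(1 / 2) * ((x - μ) ⬝ᵥ A *ᵥ (x - μ)))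
        ≤ (C * (∏ i, (1 + (x i - μ i) ^ 2)) ^ 2) *
            (∏ i, Real.exp (-(c / 2 * (x i - μ i) ^ 2))) := by
          apply mul_le_mul (hb x) hexp (Real.exp_pos _).le
          positivity
      _ = C * ∏ i, ((1 + (x i - μ i) ^ 2) ^ 2 * Real.exp (-(c / 2 * (x i - μ i) ^ 2))) := by
          rw [← Finset.prod_pow, mul_assoc, ← Finset.prod_mul_distrib]

lemma single_le_prod_real {ιt : Type*} [DecidableEq ιt] {s : Finset ιt} {f : ιt → ℝ}
    (h : ∀ j ∈ s, 1 ≤ f j) {i : ιt} (hi : i ∈ s) : f i ≤ ∏ j ∈ s, f j := by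
  rw [← Finset.mul_prod_erase s f hi]
  have h1 : ∏ j ∈ s.erase i, (1:ℝ) ≤ ∏ j ∈ s.erase i, f j :=
    Finset.prod_le_prod (fun j _ => zero_le_one)
      (fun j hj => h j (Finset.mem_of_mem_erase hj))
  rw [Finset.prod_const_one] at h1
  exact le_mul_of_one_le_right (by linarith [h i hi]) h1

lemma one_le_prod_real {ιt : Type*} {s : Finset ιt} {f : ιt → ℝ}
    (h : ∀ j ∈ s, 1 ≤ f j) : (1:ℝ) ≤ ∏ j ∈ s, f j := by
  calc (1:ℝ) = ∏ _j ∈ s, (1:ℝ) := Finset.prod_const_one.symm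
    _ ≤ ∏ j ∈ s, f j :=
      Finset.prod_le_prod (fun j _ => zero_le_one) h

/-- Differential entropy of a truncated multivariate Gaussian (Appendix D.3 of the paper):
with `Z = ∫_R g`, `p = (1/Z) g·1_R`, truncated mean `μ^{TN}`, truncated covariance `Σ^{TN}`, and
`d = μ^{TN} − μ`, one has
`−∫_R p log p = (1/2) log((2π)^q det Σ) + (1/2) Tr(Σ⁻¹ (Σ^{TN} + d dᵀ)) + log Z`. -/
theorem truncated_multivariate_gaussian_entropy (q : ℕ)
    (Sig : Matrix (Fin q) (Fin q) ℝ) (hSig : Sig.PosDef) (μ : Fin q → ℝ)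
    (R : Set (Fin q → ℝ)) (hR : MeasurableSet R)
    (Z : ℝ) (hZdef : Z = ∫ x in R, gaussDensity μ Sig x) (hZpos : 0 < Z)
    (p : (Fin q → ℝ) → ℝ) (hp : p = R.indicator (fun x => gaussDensity μ Sig x / Z))
    (μTN : Fin q → ℝ) (hμTN : μTN = fun i => ∫ x in R, x i * p x)
    (SigTN : Matrix (Fin q) (Fin q) ℝ)
    (hSigTN : SigTN = Matrix.of fun i j => ∫ x in R, (x i - μTN i) * (x j - μTN j) * p x) :
    -(∫ x in R, p x * Real.log (p x)) =
      (1 / 2) * Real.log ((2 * π) ^ q * Sig.det) +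
        (1 / 2) * Matrix.trace (Sig⁻¹ * (SigTN + Matrix.vecMulVec (μTN - μ) (μTN - μ))) +
          Real.log Z := by
  have hA : (Sig⁻¹).PosDef := hSig.inv
  have hdet : 0 < Sig.det := hSig.det_pos
  set G : (Fin q → ℝ) → ℝ := gaussDensity μ Sig with hGdef
  obtain ⟨K, hK⟩ : ∃ K : ℝ, K = (2 * π) ^ (-(q : ℝ) / 2) * (Real.sqrt Sig.det)⁻¹ := ⟨_, rfl⟩
  have hπ : (0:ℝ) < 2 * π := by positivity
  have hKpos : 0 < K := by
    rw [hK]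
    exact mul_pos (Real.rpow_pos_of_pos hπ _) (inv_pos.2 (Real.sqrt_pos.2 hdet))
  set Q : (Fin q → ℝ) → ℝ := fun x => (x - μ) ⬝ᵥ Sig⁻¹ *ᵥ (x - μ) with hQdef
  have hGx : ∀ x, G x = K * Real.exp (-(1 / 2) * Q x) := by
    intro x
    rw [hGdef, hK, hQdef]
    simp only [gaussDensity, Fintype.card_fin]
  have hGpos : ∀ x, 0 < G x := fun x => by rw [hGx]; positivity
  -- master integrability specialized to G
  have master : ∀ (h : (Fin q → ℝ) → ℝ) (C : ℝ), Continuous h →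
      (∀ x, |h x| ≤ C * (∏ i, (1 + (x i - μ i) ^ 2)) ^ 2) →
      Integrable (fun x => h x * G x) := by
    intro h C hcont hb
    have key := master_integrable hA μ (h := fun x => K * h x)
      (continuous_const.mul hcont) (C := K * C)
      (fun x => by
        calc |K * h x| = K * |h x| := by rw [abs_mul, abs_of_pos hKpos]
          _ ≤ K * (C * (∏ i, (1 + (x i - μ i) ^ 2)) ^ 2) :=
              mul_le_mul_of_nonneg_left (hb x) hKpos.le
          _ = K * C * (∏ i, (1 + (x i - μ i) ^ 2)) ^ 2 := (mul_assoc _ _ _).symm)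
    have : (fun x => (K * h x) * Real.exp (-(1 / 2) * ((x - μ) ⬝ᵥ Sig⁻¹ *ᵥ (x - μ))))
        = fun x => h x * G x := by
      funext x; rw [hGx x, hQdef]; ring
    rwa [this] at key
  have hW : ∀ x : Fin q → ℝ, (1:ℝ) ≤ ∏ i, (1 + (x i - μ i) ^ 2) :=
    fun x => one_le_prod_real fun i _ => by nlinarith [sq_nonneg (x i - μ i)]
  have habs : ∀ (i : Fin q) (a : ℝ) (x : Fin q → ℝ),
      |x i - a| ≤ (1 + |μ i - a|) * ∏ j, (1 + (x j - μ j) ^ 2) := by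
    intro i a x
    have h1 : |x i - a| ≤ |x i - μ i| + |μ i - a| := abs_sub_le _ _ _
    have h2 : 1 + (x i - μ i) ^ 2 ≤ ∏ j, (1 + (x j - μ j) ^ 2) :=
      single_le_prod_real (f := fun j => 1 + (x j - μ j) ^ 2)
        (fun j _ => show (1:ℝ) ≤ 1 + (x j - μ j) ^ 2 by nlinarith [sq_nonneg (x j - μ j)])
        (Finset.mem_univ i)
    have h3 : |x i - μ i| ≤ 1 + (x i - μ i) ^ 2 := by
      nlinarith [sq_abs (x i - μ i), sq_nonneg (|x i - μ i| - 1)]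
    have h4 : |μ i - a| * 1 ≤ |μ i - a| * ∏ j, (1 + (x j - μ j) ^ 2) :=
      mul_le_mul_of_nonneg_left (hW x) (abs_nonneg _)
    nlinarith
  have I1 : Integrable G := by
    have := master (fun _ => 1) 1 continuous_const (fun x => by
      have hw := hW x
      rw [abs_one]; nlinarith)
    simpa using this
  have I2 : ∀ (i : Fin q) (a : ℝ), Integrable (fun x => (x i - a) * G x) := by
    intro i a
    apply master _ (1 + |μ i - a|) ((continuous_apply i).sub continuous_const)
    intro x
    simp only [Pi.sub_apply]
    have hw := hW x
    have := habs i a x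
    have hpos : (0:ℝ) ≤ 1 + |μ i - a| := by positivity
    have hW2 : (1 + |μ i - a|) * ∏ j, (1 + (x j - μ j) ^ 2)
        ≤ (1 + |μ i - a|) * (∏ j, (1 + (x j - μ j) ^ 2)) ^ 2 :=
      mul_le_mul_of_nonneg_left (by nlinarith) hpos
    linarith
  have I3 : ∀ (i j : Fin q) (a b : ℝ),
      Integrable (fun x => (x i - a) * (x j - b) * G x) := by
    intro i j a b
    apply master _ ((1 + |μ i - a|) * (1 + |μ j - b|))
      (((continuous_apply i).sub continuous_const).mul
        ((continuous_apply j).sub continuous_const))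
    intro x
    simp only [Pi.mul_apply, Pi.sub_apply]
    have ha := habs i a x
    have hb' := habs j b x
    rw [abs_mul]
    have h1 : (0:ℝ) ≤ |x i - a| := abs_nonneg _
    have h2 : (0:ℝ) ≤ 1 + |μ i - a| := by positivity
    have h3 : (0:ℝ) ≤ 1 + |μ j - b| := by positivity
    have hw := hW x
    calc |x i - a| * |x j - b|
        ≤ ((1 + |μ i - a|) * ∏ k, (1 + (x k - μ k) ^ 2)) *
          ((1 + |μ j - b|) * ∏ k, (1 + (x k - μ k) ^ 2)) := by
          apply mul_le_mul ha hb' (abs_nonneg _) (by positivity)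
      _ = (1 + |μ i - a|) * (1 + |μ j - b|) * (∏ k, (1 + (x k - μ k) ^ 2)) ^ 2 := by ring
  -- p facts
  have hpae : ∀ᵐ x ∂(volume.restrict R), p x = G x / Z := by
    filter_upwards [ae_restrict_mem hR] with x hx
    rw [hp]
    exact Set.indicator_of_mem hx _
  have intP : ∀ {P : (Fin q → ℝ) → ℝ}, Integrable (fun x => P x * G x) volume →
      Integrable (fun x => P x * p x) (volume.restrict R) := by
    intro P hPG
    refine (hPG.integrableOn.div_const Z).congr ?_
    filter_upwards [hpae] with x hx
    rw [hx, mul_div_assoc]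
  have hpone : ∫ x in R, p x = 1 := by
    rw [integral_congr_ae hpae, integral_div, ← hZdef, div_self hZpos.ne']
  have hpint : Integrable p (volume.restrict R) := by
    have := intP (P := fun _ => (1:ℝ)) (by simpa using I1)
    simpa using this
  have hxi : ∀ i, ∫ x in R, (x i - μTN i) * p x = 0 := by
    intro i
    have h1 : Integrable (fun x => x i * p x) (volume.restrict R) := by
      have := intP (P := fun x => x i) (by simpa using I2 i 0)
      exact this
    have h2 : Integrable (fun x => μTN i * p x) (volume.restrict R) := hpint.const_mul _
    have hsplit : (fun x : Fin q → ℝ => (x i - μTN i) * p x)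
        = fun x => x i * p x - μTN i * p x := funext fun x => by ring
    rw [hsplit, integral_sub h1 h2, integral_const_mul, hpone]
    have : ∫ x in R, x i * p x = μTN i := by rw [hμTN]
    rw [this]; ring
  have hsecond : ∀ i j, ∫ x in R, (x i - μ i) * (x j - μ j) * p x
      = SigTN i j + (μTN i - μ i) * (μTN j - μ j) := by
    intro i j
    have e1 : Integrable (fun x => (x i - μTN i) * (x j - μTN j) * p x)
        (volume.restrict R) := intP (I3 i j (μTN i) (μTN j))
    have e2 : Integrable (fun x => (μTN j - μ j) * ((x i - μTN i) * p x))
        (volume.restrict R) := (intP (I2 i (μTN i))).const_mul _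
    have e3 : Integrable (fun x => (μTN i - μ i) * ((x j - μTN j) * p x))
        (volume.restrict R) := (intP (I2 j (μTN j))).const_mul _
    have e4 : Integrable (fun x => ((μTN i - μ i) * (μTN j - μ j)) * p x)
        (volume.restrict R) := hpint.const_mul _
    have expand : (fun x : Fin q → ℝ => (x i - μ i) * (x j - μ j) * p x)
        = fun x => ((x i - μTN i) * (x j - μTN j) * p x
            + (μTN j - μ j) * ((x i - μTN i) * p x))
            + ((μTN i - μ i) * ((x j - μTN j) * p x)
            + ((μTN i - μ i) * (μTN j - μ j)) * p x) := funext fun x => by ring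
    have e12 : Integrable (fun x => (x i - μTN i) * (x j - μTN j) * p x
        + (μTN j - μ j) * ((x i - μTN i) * p x)) (volume.restrict R) := e1.add e2
    have e34 : Integrable (fun x => (μTN i - μ i) * ((x j - μTN j) * p x)
        + ((μTN i - μ i) * (μTN j - μ j)) * p x) (volume.restrict R) := e3.add e4
    rw [expand, integral_add e12 e34, integral_add e1 e2,
      integral_add e3 e4, integral_const_mul, integral_const_mul, integral_const_mul,
      hxi i, hxi j, hpone]
    have : SigTN i j = ∫ x in R, (x i - μTN i) * (x j - μTN j) * p x := by
      rw [hSigTN]; rfl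
    rw [← this]; ring
  -- Q * p
  have hQsum : ∀ x, Q x * p x
      = ∑ i, ∑ j, Sig⁻¹ i j * ((x i - μ i) * (x j - μ j) * p x) := by
    intro x
    rw [hQdef]
    simp only [dotProduct, Matrix.mulVec, Pi.sub_apply, Finset.sum_mul]
    apply Finset.sum_congr rfl; intro i _
    rw [mul_comm ((x i - μ i)) _, Finset.sum_mul, Finset.sum_mul]
    apply Finset.sum_congr rfl; intro j _
    ring
  have intQsummand : ∀ (i j : Fin q), Integrable
      (fun x => Sig⁻¹ i j * ((x i - μ i) * (x j - μ j) * p x)) (volume.restrict R) :=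
    fun i j => (intP (I3 i j (μ i) (μ j))).const_mul _
  have intQp : Integrable (fun x => Q x * p x) (volume.restrict R) := by
    have hfe : (fun x => Q x * p x)
        = fun x => ∑ i, ∑ j, Sig⁻¹ i j * ((x i - μ i) * (x j - μ j) * p x) :=
      funext hQsum
    rw [hfe]
    exact integrable_finset_sum _ fun i _ => integrable_finset_sum _ fun j _ =>
      intQsummand i j
  have hQint : ∫ x in R, Q x * p x
      = ∑ i, ∑ j, Sig⁻¹ i j * (SigTN i j + (μTN i - μ i) * (μTN j - μ j)) := by
    have hfe : (fun x => Q x * p x)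
        = fun x => ∑ i, ∑ j, Sig⁻¹ i j * ((x i - μ i) * (x j - μ j) * p x) :=
      funext hQsum
    rw [hfe, integral_finset_sum _ (fun i _ =>
      integrable_finset_sum _ fun j _ => intQsummand i j)]
    apply Finset.sum_congr rfl; intro i _
    rw [integral_finset_sum _ (fun j _ => intQsummand i j)]
    apply Finset.sum_congr rfl; intro j _
    rw [integral_const_mul, hsecond i j]
  -- trace identity
  have htrace : Matrix.trace (Sig⁻¹ * (SigTN + Matrix.vecMulVec (μTN - μ) (μTN - μ)))
      = ∑ i, ∑ j, Sig⁻¹ i j * (SigTN i j + (μTN i - μ i) * (μTN j - μ j)) := by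
    rw [Matrix.trace]
    simp only [Matrix.diag, Matrix.mul_apply, Matrix.add_apply, Matrix.vecMulVec_apply,
      Pi.sub_apply]
    apply Finset.sum_congr rfl; intro i _
    apply Finset.sum_congr rfl; intro j _
    have hsym : SigTN j i = SigTN i j := by
      rw [hSigTN]
      simp only [Matrix.of_apply]
      congr 1; funext x; ring
    rw [hsym]; ring
  -- log of G
  obtain ⟨c1, hc1def⟩ : ∃ c1 : ℝ, c1 = (q:ℝ)/2 * Real.log (2*π) + 1/2 * Real.log Sig.det :=
    ⟨_, rfl⟩
  have hc1 : ∀ x, Real.log (G x) = -c1 - 1/2 * Q x := by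
    intro x
    rw [hGx x, Real.log_mul hKpos.ne' (Real.exp_pos _).ne', Real.log_exp, hK,
      Real.log_mul (Real.rpow_pos_of_pos hπ _).ne'
        (inv_pos.2 (Real.sqrt_pos.2 hdet)).ne',
      Real.log_rpow hπ, Real.log_inv, Real.log_sqrt hdet.le, hc1def]
    ring
  -- entropy integrand
  have hent : ∀ᵐ x ∂(volume.restrict R), p x * Real.log (p x)
      = (-(c1 + Real.log Z)) * p x + (-(1/2 : ℝ)) * (Q x * p x) := by
    filter_upwards [hpae] with x hx
    rw [hx, Real.log_div (hGpos x).ne' hZpos.ne', hc1 x]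
    ring
  have intc : Integrable (fun x => (-(c1 + Real.log Z)) * p x) (volume.restrict R) :=
    hpint.const_mul _
  have intq2 : Integrable (fun x => (-(1/2 : ℝ)) * (Q x * p x)) (volume.restrict R) :=
    intQp.const_mul _
  have hmain : ∫ x in R, p x * Real.log (p x)
      = -(c1 + Real.log Z) + (-(1/2 : ℝ)) * ∫ x in R, Q x * p x := by
    rw [integral_congr_ae hent, integral_add intc intq2, integral_const_mul,
      integral_const_mul, hpone]
    ring
  have hfirst : (1/2 : ℝ) * Real.log ((2*π)^q * Sig.det) = c1 := by
    rw [Real.log_mul (by positivity) hdet.ne', Real.log_pow, hc1def]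
    ring
  rw [hmain, hQint, ← htrace, hfirst]
  ring
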